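/- The function Λ(ξ) = ξ·√(tanh ξ / ξ) is strictly concave on (0, ∞), i.e., Λ''(ξ) < 0 for all ξ > 0. -/

import Mathlib

open Real Filter

/-- The Whitham dispersion relation, `Λ ξ = ξ * √(tanh ξ / ξ)`. -/
noncomputable def Lam (ξ : ℝ) : ℝ := ξ * Real.sqrt (Real.tanh ξ / ξ)

lemma my_hasDerivAt_tanh (x : ℝ) :
    HasDerivAt Real.tanh (1 - Real.tanh x ^ 2) x := by
  have hc : Real.cosh x ≠ 0 := (Real.cosh_pos x).ne'
  have h : HasDerivAt (fun y => Real.sinh y / Real.cosh y)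
      ((Real.cosh x * Real.cosh x - Real.sinh x * Real.sinh x) / Real.cosh x ^ 2) x :=
    (Real.hasDerivAt_sinh x).div (Real.hasDerivAt_cosh x) hc
  have heq : (fun y => Real.sinh y / Real.cosh y) = Real.tanh := by
    funext y; rw [Real.tanh_eq_sinh_div_cosh]
  rw [heq] at h
  convert h using 1
  rw [Real.tanh_eq_sinh_div_cosh]
  have hc2 : Real.cosh x ^ 2 = Real.sinh x ^ 2 + 1 := Real.cosh_sq x
  field_simp

lemma tanh_pos' {x : ℝ} (hx : 0 < x) : 0 < Real.tanh x := by
  rw [Real.tanh_eq_sinh_div_cosh]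
  exact div_pos (by rwa [Real.sinh_pos_iff]) (Real.cosh_pos x)

lemma tanh_lt_one' (x : ℝ) : Real.tanh x < 1 := by
  rw [Real.tanh_eq_sinh_div_cosh]
  rw [div_lt_one (Real.cosh_pos x)]
  exact Real.sinh_lt_cosh x

noncomputable def g (x : ℝ) : ℝ := Real.sqrt (x * Real.tanh x)

noncomputable def g1 (x : ℝ) : ℝ :=
  (Real.tanh x + x * (1 - Real.tanh x ^ 2)) / (2 * Real.sqrt (x * Real.tanh x))

lemma f_hasDerivAt (x : ℝ) :
    HasDerivAt (fun y => y * Real.tanh y)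
      (Real.tanh x + x * (1 - Real.tanh x ^ 2)) x := by
  have := (hasDerivAt_id x).mul (my_hasDerivAt_tanh x)
  rw [show (fun y => y * Real.tanh y) = id * Real.tanh from by funext y; simp]
  exact this.congr_deriv (by simp)

lemma f_pos {x : ℝ} (hx : 0 < x) : 0 < x * Real.tanh x :=
  mul_pos hx (tanh_pos' hx)

lemma g_hasDerivAt {x : ℝ} (hx : 0 < x) : HasDerivAt g (g1 x) x := by
  have hf := f_hasDerivAt x
  have hs := (Real.hasDerivAt_sqrt (f_pos hx).ne').comp x hf
  have : g1 x = 1 / (2 * Real.sqrt (x * Real.tanh x)) *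
      (Real.tanh x + x * (1 - Real.tanh x ^ 2)) := by
    unfold g1; ring
  rw [this]
  exact hs

lemma g1_deriv_neg {ξ : ℝ} (hξ : 0 < ξ) : deriv g1 ξ < 0 := by
  set t := Real.tanh ξ with ht
  set r := Real.sqrt (ξ * t) with hr
  have hrpos : 0 < r := Real.sqrt_pos.mpr (f_pos hξ)
  have hr2 : r ^ 2 = ξ * t := Real.sq_sqrt (f_pos hξ).le
  have htpos : 0 < t := tanh_pos' hξ
  have htlt : t < 1 := tanh_lt_one' ξ
  -- derivative of numerator N = tanh + x(1 - tanh^2)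
  have hN : HasDerivAt (fun x => Real.tanh x + x * (1 - Real.tanh x ^ 2))
      ((1 - t ^ 2) + ((1 - t ^ 2) + ξ * (-(2 * t * (1 - t ^ 2))))) ξ := by
    have h1 := my_hasDerivAt_tanh ξ
    have h2 : HasDerivAt (fun x => 1 - Real.tanh x ^ 2)
        (-(2 * Real.tanh ξ ^ (2 - 1) * (1 - Real.tanh ξ ^ 2))) ξ :=
      (((my_hasDerivAt_tanh ξ).pow 2).const_sub 1)
    have h3 := (hasDerivAt_id ξ).mul h2
    have := h1.add h3
    refine HasDerivAt.congr_deriv this ?_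
    rw [← ht]
    norm_num
  -- derivative of denominator D = 2 * sqrt (x * tanh x)
  have hD : HasDerivAt (fun x => 2 * Real.sqrt (x * Real.tanh x)) (2 * g1 ξ) ξ :=
    (g_hasDerivAt hξ).const_mul 2
  have hDne : 2 * Real.sqrt (ξ * Real.tanh ξ) ≠ 0 := by
    positivity
  have hg1 : HasDerivAt g1
      ((((1 - t ^ 2) + ((1 - t ^ 2) + ξ * (-(2 * t * (1 - t ^ 2))))) * (2 * r)
        - (t + ξ * (1 - t ^ 2)) * (2 * g1 ξ)) / (2 * r) ^ 2) ξ := by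
    exact hN.div hD hDne
  rw [hg1.deriv]
  have hg1val : g1 ξ = (t + ξ * (1 - t ^ 2)) / (2 * r) := rfl
  rw [hg1val]
  rw [div_lt_iff₀ (by positivity)]
  rw [zero_mul]
  have key : ((1 - t ^ 2) + ((1 - t ^ 2) + ξ * (-(2 * t * (1 - t ^ 2))))) * (2 * r)
        - (t + ξ * (1 - t ^ 2)) * (2 * ((t + ξ * (1 - t ^ 2)) / (2 * r)))
      = (2 * (2 * (1 - t ^ 2) - 2 * ξ * t * (1 - t ^ 2)) * (ξ * t)
          - (t + ξ * (1 - t ^ 2)) ^ 2) / r := by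
    rw [← hr2]
    field_simp
    ring
  rw [key]
  apply div_neg_of_neg_of_pos _ hrpos
  nlinarith [sq_nonneg (t - ξ * (1 - t ^ 2)),
    mul_pos (mul_pos (mul_pos hξ hξ) (mul_pos htpos htpos))
      (sub_pos.mpr (by nlinarith : t ^ 2 < 1))]

/-- `Λ` is strictly concave on `(0, ∞)`: `Λ''(ξ) < 0` for all `ξ > 0`. -/
theorem deriv2_Lam_neg : ∀ ξ : ℝ, 0 < ξ → deriv (deriv Lam) ξ < 0 := by
  intro ξ hξ
  have hEv : Lam =ᶠ[nhds ξ] g := by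
    filter_upwards [eventually_gt_nhds hξ] with x hx
    unfold Lam g
    rw [show x * Real.tanh x = x ^ 2 * (Real.tanh x / x) by field_simp,
      Real.sqrt_mul (sq_nonneg x), Real.sqrt_sq hx.le]
  have h1 : deriv Lam =ᶠ[nhds ξ] deriv g := hEv.deriv
  have h2 : deriv g =ᶠ[nhds ξ] g1 := by
    filter_upwards [eventually_gt_nhds hξ] with x hx
    exact (g_hasDerivAt hx).deriv
  have : deriv (deriv Lam) ξ = deriv g1 ξ := (h1.trans h2).deriv_eq
  rw [this]
  exact g1_deriv_neg hξ
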